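/- Let C be a perfect complex over the formal power series ring C[[ħ]] (ħ one formal variable over the complex numbers). Write ι : C → C[[ħ]] for the quotient map to the residue field ħ ↦ 0 and K = C((ħ)) for the fraction field. If for every integer i one has dim_C H^i(C ⊗^L_{C[[ħ]]} C) = dim_{C((ħ))} H^i(C ⊗_{C[[ħ]]} C((ħ))), then every cohomology module H^i(C) is a finite free C[[ħ]]-module. -/

import Mathlib

open Module

universe v

section SpanRank
variable {F : Type} [Field F] {V : Type v} [AddCommGroup V] [Module F V]

lemma finrank_span_smul_basis {ι : Type v} {κ : Type} [Fintype κ]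
    (b : Basis ι F V) (u : κ ↪ ι) (c : κ → F) :
    finrank F (Submodule.span F (Set.range fun j => c j • b (u j))) =
      Nat.card {j : κ // c j ≠ 0} := by
  classical
  have hspan : Submodule.span F (Set.range fun j => c j • b (u j)) =
      Submodule.span F (Set.range fun j : {j : κ // c j ≠ 0} => c j.1 • b (u j.1)) := by
    apply le_antisymm
    · rw [Submodule.span_le]
      rintro - ⟨j, rfl⟩
      by_cases h : c j = 0
      · simp [h]
      · exact Submodule.subset_span ⟨⟨j, h⟩, rfl⟩
    · apply Submodule.span_mono
      rintro - ⟨j, rfl⟩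
      exact ⟨j.1, rfl⟩
  have hli : LinearIndependent F (fun j : {j : κ // c j ≠ 0} => c j.1 • b (u j.1)) := by
    have h0 : LinearIndependent F (fun j : {j : κ // c j ≠ 0} => b (u j.1)) :=
      b.linearIndependent.comp _ (fun x y hxy => Subtype.ext (u.injective hxy))
    have := h0.units_smul (fun j => Units.mk0 (c j.1) j.2)
    exact this
  rw [hspan, finrank_span_eq_card hli, Nat.card_eq_fintype_card]
end SpanRank

section CardHelpers

lemma nat_card_subtype_le (α : Type) [Finite α] (P : α → Prop) :
    Nat.card {j : α // P j} ≤ Nat.card α :=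
  Nat.card_le_card_of_injective Subtype.val Subtype.val_injective

lemma forall_of_nat_card_subtype_eq {α : Type} [Finite α] {P : α → Prop}
    (h : Nat.card {j : α // P j} = Nat.card α) : ∀ j, P j := by
  classical
  cases nonempty_fintype α
  intro j
  by_contra hj
  rw [Nat.card_eq_fintype_card, Nat.card_eq_fintype_card, Fintype.card_subtype] at h
  have hsub : Finset.univ.filter P ⊆ Finset.univ := Finset.filter_subset _ _
  have : Finset.univ.filter P = (Finset.univ : Finset α) :=
    Finset.eq_of_subset_of_card_le hsub (by rw [h, Finset.card_univ])
  have := Finset.mem_filter.mp (this ▸ Finset.mem_univ j)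
  exact hj this.2

end CardHelpers


section BaseChange
variable {R : Type} [CommRing R] {F : Type} [Field F] [Algebra R F]
variable {M N : Type v} [AddCommGroup M] [Module R M] [AddCommGroup N] [Module R N]

lemma range_baseChange (φ : M →ₗ[R] N) :
    LinearMap.range (φ.baseChange F) = (LinearMap.range φ).baseChange F := by
  apply le_antisymm
  · rintro - ⟨x, rfl⟩
    induction x using TensorProduct.induction_on with
    | zero => simp
    | tmul s m =>
        rw [LinearMap.baseChange_tmul]
        exact Submodule.tmul_mem_baseChange_of_mem s ⟨m, rfl⟩
    | add x y hx hy => rw [map_add]; exact Submodule.add_mem _ hx hy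
  · rw [Submodule.baseChange_eq_span, Submodule.span_le]
    rintro - ⟨-, ⟨m, rfl⟩, rfl⟩
    exact ⟨1 ⊗ₜ m, by simp⟩

lemma submodule_eq_span_range_basis (p : Submodule R N) {n : ℕ} (bp : Basis (Fin n) R p) :
    p = Submodule.span R (Set.range fun j => (bp j : N)) := by
  conv_lhs => rw [← Submodule.map_subtype_top p, ← bp.span_eq]
  rw [Submodule.map_span]
  congr 1
  ext x
  simp [Set.range_comp]

lemma finrank_range_baseChange (φ : M →ₗ[R] N) {ι : Type v} [Fintype ι] {m : ℕ}
    (snf : Basis.SmithNormalForm (LinearMap.range φ) ι m) :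
    finrank F (LinearMap.range (φ.baseChange F)) =
      Nat.card {j : Fin m // algebraMap R F (snf.a j) ≠ 0} := by
  have h2 := congrArg (Submodule.baseChange (M := N) F)
    (submodule_eq_span_range_basis (LinearMap.range φ) snf.bN)
  rw [range_baseChange, h2, Submodule.baseChange_span, ← Set.range_comp]
  have hcomp : (TensorProduct.mk R F N 1 ∘ fun j => (snf.bN j : N)) =
      fun j => (algebraMap R F (snf.a j)) • (snf.bM.baseChange F (snf.f j)) := by
    funext j
    simp only [Function.comp_apply, TensorProduct.mk_apply, snf.snf j, Basis.baseChange_apply,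
      TensorProduct.tmul_smul, algebraMap_smul]
  rw [hcomp]
  exact finrank_span_smul_basis (snf.bM.baseChange F) snf.f _

lemma finrank_baseChange_of_basis {ι : Type v} [Fintype ι] (b : Basis ι R N) :
    finrank F (TensorProduct R F N) = Fintype.card ι :=
  finrank_eq_card_basis (b.baseChange F)

lemma snf_a_ne_zero [Nontrivial R] [NoZeroSMulDivisors R N] {p : Submodule R N} {ι : Type v} {m : ℕ}
    (snf : Basis.SmithNormalForm p ι m) (j : Fin m) : snf.a j ≠ 0 := by
  intro h
  have := snf.snf j
  rw [h, zero_smul] at this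
  exact (snf.bN.ne_zero j) (Subtype.ext this)

end BaseChange
open Module CategoryTheory

section FieldHomology
variable {F : Type} [Field F]

lemma finrank_shortComplex_homology (S : ShortComplex (ModuleCat.{v} F))
    [FiniteDimensional F S.X₂] :
    finrank F S.homology + finrank F (LinearMap.range S.f.hom) + finrank F (LinearMap.range S.g.hom)
      = finrank F S.X₂ := by
  have e1 : finrank F S.homology = finrank F S.moduleCatLeftHomologyData.H :=
    S.moduleCatHomologyIso.toLinearEquiv.finrank_eq
  have hmap : Submodule.map (LinearMap.ker S.g.hom).subtype
      (LinearMap.range S.moduleCatToCycles) = LinearMap.range S.f.hom := by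
    rw [← LinearMap.range_comp]
    congr 1
  have e2 : finrank F (LinearMap.range S.moduleCatToCycles) = finrank F (LinearMap.range S.f.hom) := by
    rw [← hmap]
    exact (Submodule.equivMapOfInjective _ (Submodule.injective_subtype _) _).finrank_eq
  have e3 : finrank F (↥(LinearMap.ker S.g.hom) ⧸ LinearMap.range S.moduleCatToCycles)
      + finrank F (LinearMap.range S.moduleCatToCycles) = finrank F (LinearMap.ker S.g.hom) :=
    Submodule.finrank_quotient_add_finrank _
  have e4 : finrank F (LinearMap.range S.g.hom) + finrank F (LinearMap.ker S.g.hom) = finrank F S.X₂ :=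
    LinearMap.finrank_range_add_finrank_ker _
  have : finrank F S.moduleCatLeftHomologyData.H
      = finrank F (↥(LinearMap.ker S.g.hom) ⧸ LinearMap.range S.moduleCatToCycles) := rfl
  omega

lemma finrank_cochain_homology (D : CochainComplex (ModuleCat.{v} F) ℤ)
    [∀ j : ℤ, FiniteDimensional F (D.X j)] (i : ℤ) :
    finrank F (D.homology i) + finrank F (LinearMap.range (D.d (i-1) i).hom)
      + finrank F (LinearMap.range (D.d i (i+1)).hom) = finrank F (D.X i) := by
  have e0 : finrank F (D.homology i) = finrank F ((D.sc' (i-1) i (i+1)).homology) :=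
    (D.homologyIsoSc' (i-1) i (i+1) (by simp) (by simp)).toLinearEquiv.finrank_eq
  haveI : FiniteDimensional F ((D.sc' (i-1) i (i+1)).X₂) := ‹∀ j, FiniteDimensional F (D.X j)› i
  have := finrank_shortComplex_homology (D.sc' (i-1) i (i+1))
  rw [e0]
  exact this

end FieldHomology

section Structural
variable {R : Type} [CommRing R] [IsDomain R]
variable {N : Type v} [AddCommGroup N] [Module R N]

lemma noZeroSMulDivisors_of_injective {P : Type v} [AddCommGroup P] [Module R P]
    [NoZeroSMulDivisors R P] (ψ : N →ₗ[R] P) (hψ : Function.Injective ψ) :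
    NoZeroSMulDivisors R N := by
  constructor
  intro r x h
  have : r • ψ x = 0 := by rw [← map_smul, h, map_zero]
  rcases smul_eq_zero.mp this with hr | hx
  · exact Or.inl hr
  · exact Or.inr (hψ (by rw [hx, map_zero]))

instance pi_noZeroSMulDivisors (α : Type) : NoZeroSMulDivisors R (α → R) := by
  constructor
  intro r f h
  by_cases hr : r = 0
  · exact Or.inl hr
  · refine Or.inr (funext fun a => ?_)
    have := congrFun h a
    simp only [Pi.smul_apply, smul_eq_mul, Pi.zero_apply] at this
    exact (mul_eq_zero.mp this).resolve_left hr

/-- If the Smith normal form of `B ≤ N` has unit diagonal entries, then `N ⧸ B`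
is torsion-free. -/
lemma quotient_noZeroSMulDivisors_of_unit_snf {B : Submodule R N} {ι : Type v} [Fintype ι]
    {m : ℕ} (snf : Basis.SmithNormalForm B ι m) (hu : ∀ j, IsUnit (snf.a j)) :
    NoZeroSMulDivisors R (N ⧸ B) := by
  classical
  -- the map recording coordinates away from the range of `snf.f`
  let ψ : N →ₗ[R] ({i : ι // i ∉ Set.range snf.f} → R) :=
    { toFun := fun x i => snf.bM.repr x i
      map_add' := by intro x y; funext i; simp
      map_smul' := by intro r x; funext i; simp }
  have hker : LinearMap.ker ψ = B := by
    ext x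
    constructor
    · intro hx
      have hrepr : ∀ i : ι, i ∉ Set.range snf.f → snf.bM.repr x i = 0 := by
        intro i hi
        exact congrFun (LinearMap.mem_ker.mp hx) ⟨i, hi⟩
      -- write x as a sum over the basis
      have hx' : x = ∑ i : ι, snf.bM.repr x i • snf.bM i := (snf.bM.sum_repr x).symm
      rw [hx']
      apply Submodule.sum_mem
      intro i _
      by_cases hi : i ∈ Set.range snf.f
      · obtain ⟨j, rfl⟩ := hi
        -- bM (f j) = (a j)⁻¹ • bN j ∈ B
        have hBj : (snf.bN j : N) ∈ B := (snf.bN j).2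
        have h1 : ((hu j).unit⁻¹ : Rˣ) • (snf.bN j : N) = snf.bM (snf.f j) := by
          rw [snf.snf j, ← smul_assoc, Units.smul_def, smul_eq_mul, IsUnit.val_inv_mul, one_smul]
        rw [← h1]
        exact Submodule.smul_mem _ _ (Submodule.smul_of_tower_mem _ _ hBj)
      · rw [hrepr i hi, zero_smul]
        exact Submodule.zero_mem _
    · intro hx
      apply LinearMap.mem_ker.mpr
      funext i
      exact snf.repr_eq_zero_of_notMem_range ⟨x, hx⟩ i.2
  have e : (N ⧸ B) ≃ₗ[R] LinearMap.range ψ :=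
    (Submodule.quotEquivOfEq B (LinearMap.ker ψ) hker.symm).trans ψ.quotKerEquivRange
  exact noZeroSMulDivisors_of_injective
    ((LinearMap.range ψ).subtype.comp (e : (N ⧸ B) →ₗ[R] LinearMap.range ψ))
    ((Submodule.injective_subtype _).comp e.injective)

lemma quotient_comap_noZeroSMulDivisors {B Z : Submodule R N} (hBZ : B ≤ Z)
    [NoZeroSMulDivisors R (N ⧸ B)] :
    NoZeroSMulDivisors R (↥Z ⧸ B.comap Z.subtype) := by
  constructor
  intro r x h
  by_cases hr : r = 0
  · exact Or.inl hr
  refine Or.inr ?_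
  obtain ⟨z, rfl⟩ := Submodule.Quotient.mk_surjective _ x
  rw [← Submodule.Quotient.mk_smul, Submodule.Quotient.mk_eq_zero] at h
  have hz : r • (z : N) ∈ B := h
  have : r • (Submodule.Quotient.mk (z : N) : N ⧸ B) = 0 := by
    rw [← Submodule.Quotient.mk_smul, Submodule.Quotient.mk_eq_zero]
    exact hz
  rcases smul_eq_zero.mp this with hr' | hz'
  · exact absurd hr' hr
  · rw [Submodule.Quotient.mk_eq_zero] at hz'
    rw [Submodule.Quotient.mk_eq_zero]
    exact hz'

end Structural


set_option maxHeartbeats 2000000 in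
set_option synthInstance.maxHeartbeats 200000 in
/-- Let `C` be a perfect complex over `ℂ[[ħ]]` (a bounded complex of finite free
`ℂ[[ħ]]`-modules).  Write `ι : ℂ[[ħ]] → ℂ` for the reduction `ħ ↦ 0` to the residue field and
`ℂ((ħ))` (Laurent series) for the fraction field.  If for every integer `i` one has
`dim_ℂ H^i(ι^* C) = dim_{ℂ((ħ))} H^i(C ⊗ ℂ((ħ)))`, then every cohomology module `H^i(C)` is
a finite free `ℂ[[ħ]]`-module.  (Since the terms of `C` are free, the underived base changes
along `constantCoeff : ℂ[[ħ]] → ℂ` and `ℂ[[ħ]] → ℂ((ħ))` compute the derived ones.) -/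
theorem stmt1 (C : CochainComplex (ModuleCat (PowerSeries ℂ)) ℤ)
    (hbdd : ∃ a b : ℤ, ∀ i : ℤ, (i < a ∨ b < i) → Subsingleton (C.X i))
    (hfree : ∀ i : ℤ, Module.Free (PowerSeries ℂ) (C.X i))
    (hfin : ∀ i : ℤ, Module.Finite (PowerSeries ℂ) (C.X i))
    (hdim : ∀ i : ℤ,
      Module.finrank ℂ
          ((((ModuleCat.extendScalars
                (PowerSeries.constantCoeff : PowerSeries ℂ →+* ℂ)).mapHomologicalComplex
              (ComplexShape.up ℤ)).obj C).homology i)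
        = Module.finrank (LaurentSeries ℂ)
          ((((ModuleCat.extendScalars
                (HahnSeries.ofPowerSeries ℤ ℂ : PowerSeries ℂ →+* LaurentSeries ℂ)).mapHomologicalComplex
              (ComplexShape.up ℤ)).obj C).homology i)) :
    ∀ i : ℤ, Module.Free (PowerSeries ℂ) (C.homology i) ∧
      Module.Finite (PowerSeries ℂ) (C.homology i) := by
  classical
  set gk : PowerSeries ℂ →+* ℂ := PowerSeries.constantCoeff with hgk
  set gK : PowerSeries ℂ →+* LaurentSeries ℂ := HahnSeries.ofPowerSeries ℤ ℂ with hgK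
  letI : Algebra (PowerSeries ℂ) ℂ := gk.toAlgebra
  letI : Algebra (PowerSeries ℂ) (LaurentSeries ℂ) := gK.toAlgebra
  haveI := fun j : ℤ => hfree j
  haveI := fun j : ℤ => hfin j
  intro i
  -- bases of the three relevant terms
  haveI hfr1 := hfree (i-1); haveI hfr2 := hfree i; haveI hfr3 := hfree (i+1)
  haveI hfi1 := hfin (i-1); haveI hfi2 := hfin i; haveI hfi3 := hfin (i+1)
  set b2 := Module.Free.chooseBasis (PowerSeries ℂ) (C.X i) with hb2
  set b3 := Module.Free.chooseBasis (PowerSeries ℂ) (C.X (i+1)) with hb3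
  -- Smith normal forms of the two differentials around degree i
  obtain ⟨m1, snf1⟩ := Submodule.smithNormalForm b2 (LinearMap.range (C.d (i-1) i).hom)
  obtain ⟨m2, snf2⟩ := Submodule.smithNormalForm b3 (LinearMap.range (C.d i (i+1)).hom)
  -- the two base-changed complexes
  set Dk := ((ModuleCat.extendScalars gk).mapHomologicalComplex (ComplexShape.up ℤ)).obj C with hDk
  set DK := ((ModuleCat.extendScalars gK).mapHomologicalComplex (ComplexShape.up ℤ)).obj C with hDK
  haveI instk : ∀ j : ℤ, FiniteDimensional ℂ (Dk.X j) := by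
    intro j
    haveI := hfree j; haveI := hfin j
    exact Module.Finite.of_basis
      ((Module.Free.chooseBasis (PowerSeries ℂ) (C.X j)).baseChange ℂ)
  haveI instK : ∀ j : ℤ, FiniteDimensional (LaurentSeries ℂ) (DK.X j) := by
    intro j
    haveI := hfree j; haveI := hfin j
    exact Module.Finite.of_basis
      ((Module.Free.chooseBasis (PowerSeries ℂ) (C.X j)).baseChange (LaurentSeries ℂ))
  have hk := finrank_cochain_homology Dk i
  have hK := finrank_cochain_homology DK i
  -- identify all the numbers
  have hXk : Module.finrank ℂ (Dk.X i)
      = Fintype.card (Module.Free.ChooseBasisIndex (PowerSeries ℂ) (C.X i)) :=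
    finrank_baseChange_of_basis b2
  have hXK : Module.finrank (LaurentSeries ℂ) (DK.X i)
      = Fintype.card (Module.Free.ChooseBasisIndex (PowerSeries ℂ) (C.X i)) :=
    finrank_baseChange_of_basis b2
  have hd1k : Module.finrank ℂ (LinearMap.range (Dk.d (i-1) i).hom)
      = Nat.card {t : Fin m1 // gk (snf1.a t) ≠ 0} :=
    finrank_range_baseChange (C.d (i-1) i).hom snf1
  have hd1K : Module.finrank (LaurentSeries ℂ) (LinearMap.range (DK.d (i-1) i).hom)
      = Nat.card {t : Fin m1 // gK (snf1.a t) ≠ 0} :=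
    finrank_range_baseChange (C.d (i-1) i).hom snf1
  have hd2k : Module.finrank ℂ (LinearMap.range (Dk.d i (i+1)).hom)
      = Nat.card {t : Fin m2 // gk (snf2.a t) ≠ 0} :=
    finrank_range_baseChange (C.d i (i+1)).hom snf2
  have hd2K : Module.finrank (LaurentSeries ℂ) (LinearMap.range (DK.d i (i+1)).hom)
      = Nat.card {t : Fin m2 // gK (snf2.a t) ≠ 0} :=
    finrank_range_baseChange (C.d i (i+1)).hom snf2
  -- the Laurent-series side sees the full ranks
  have hKinj : ∀ x : PowerSeries ℂ, gK x = 0 → x = 0 := by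
    intro x hx
    exact HahnSeries.ofPowerSeries_injective (by rw [hx, map_zero] : gK x = gK 0)
  haveI : ∀ j : ℤ, NoZeroSMulDivisors (PowerSeries ℂ) (C.X j) :=
    fun j => ⟨fun h => smul_eq_zero.mp h⟩
  have hKfull1 : ∀ t : Fin m1, gK (snf1.a t) ≠ 0 :=
    fun t h => snf_a_ne_zero snf1 t (hKinj _ h)
  have hKfull2 : ∀ t : Fin m2, gK (snf2.a t) ≠ 0 :=
    fun t h => snf_a_ne_zero snf2 t (hKinj _ h)
  have hB1 : Nat.card {t : Fin m1 // gK (snf1.a t) ≠ 0} = m1 := by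
    rw [Nat.card_congr (Equiv.subtypeUnivEquiv hKfull1), Nat.card_eq_fintype_card,
      Fintype.card_fin]
  have hB2 : Nat.card {t : Fin m2 // gK (snf2.a t) ≠ 0} = m2 := by
    rw [Nat.card_congr (Equiv.subtypeUnivEquiv hKfull2), Nat.card_eq_fintype_card,
      Fintype.card_fin]
  have hmono1 : Nat.card {t : Fin m1 // gk (snf1.a t) ≠ 0}
      ≤ Nat.card {t : Fin m1 // gK (snf1.a t) ≠ 0} :=
    Nat.card_le_card_of_injective (fun t => ⟨t.1, hKfull1 t.1⟩)
      (by intro s t h; have := congrArg Subtype.val h; exact Subtype.ext this)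
  have hmono2 : Nat.card {t : Fin m2 // gk (snf2.a t) ≠ 0}
      ≤ Nat.card {t : Fin m2 // gK (snf2.a t) ≠ 0} :=
    Nat.card_le_card_of_injective (fun t => ⟨t.1, hKfull2 t.1⟩)
      (by intro s t h; have := congrArg Subtype.val h; exact Subtype.ext this)
  have hdimi := hdim i
  rw [hXk, hd1k, hd2k] at hk
  rw [hXK, hd1K, hd2K, hB1, hB2] at hK
  -- conclude that all elementary divisors of `C.d (i-1) i` are units
  have hA1 : Nat.card {t : Fin m1 // gk (snf1.a t) ≠ 0} = m1 := by omega
  have hunit : ∀ t : Fin m1, IsUnit (snf1.a t) := by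
    have h := forall_of_nat_card_subtype_eq (α := Fin m1)
      (P := fun t => gk (snf1.a t) ≠ 0)
      (by rw [hA1, Nat.card_eq_fintype_card, Fintype.card_fin])
    intro t
    exact PowerSeries.isUnit_iff_constantCoeff.mpr (isUnit_iff_ne_zero.mpr (h t))
  -- now deduce freeness of the homology of `C` at `i`
  have h0 : LinearMap.range (C.d (i-1) i).hom ≤ LinearMap.ker (C.d i (i+1)).hom := by
    rintro - ⟨x, rfl⟩
    rw [LinearMap.mem_ker]
    have hdd := C.d_comp_d (i-1) i (i+1)
    calc (C.d i (i+1)).hom ((C.d (i-1) i).hom x) = (C.d (i-1) i ≫ C.d i (i+1)).hom x := rfl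
      _ = 0 := by rw [hdd]; rfl
  haveI hq1 : NoZeroSMulDivisors (PowerSeries ℂ)
      ((C.X i : Type _) ⧸ LinearMap.range (C.d (i-1) i).hom) :=
    quotient_noZeroSMulDivisors_of_unit_snf snf1 hunit
  haveI hq2 := quotient_comap_noZeroSMulDivisors h0
  set S := C.sc' (i-1) i (i+1) with hS
  have hrange : LinearMap.range S.moduleCatToCycles
      = (LinearMap.range (C.d (i-1) i).hom).comap (LinearMap.ker S.g.hom).subtype := by
    ext z
    constructor
    · rintro ⟨x, rfl⟩; exact ⟨x, rfl⟩
    · rintro ⟨x, hx⟩; exact ⟨x, Subtype.ext hx⟩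
  haveI hq3 : NoZeroSMulDivisors (PowerSeries ℂ) S.moduleCatLeftHomologyData.H := by
    show NoZeroSMulDivisors (PowerSeries ℂ)
      ((LinearMap.ker S.g.hom : Type _) ⧸ LinearMap.range S.moduleCatToCycles)
    rw [hrange]
    exact hq2
  haveI hX2fin : Module.Finite (PowerSeries ℂ) S.X₂ := hfi2
  haveI hfk : Module.Finite (PowerSeries ℂ) (LinearMap.ker S.g.hom) := inferInstance
  haveI hfinH : Module.Finite (PowerSeries ℂ) S.moduleCatLeftHomologyData.H :=
    Module.Finite.of_surjective (LinearMap.range S.moduleCatToCycles).mkQ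
      (Submodule.mkQ_surjective _)
  haveI : Module.IsTorsionFree (PowerSeries ℂ) S.moduleCatLeftHomologyData.H :=
    Module.IsTorsionFree.of_smul_eq_zero (fun r m h => hq3.eq_zero_or_eq_zero_of_smul_eq_zero h)
  haveI hfreeH : Module.Free (PowerSeries ℂ) S.moduleCatLeftHomologyData.H :=
    Module.free_of_finite_type_torsion_free'
  have e : (C.homology i : Type _) ≃ₗ[PowerSeries ℂ] S.moduleCatLeftHomologyData.H :=
    ((C.homologyIsoSc' (i-1) i (i+1) (by simp) (by simp)) ≪≫
      S.moduleCatHomologyIso).toLinearEquiv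
  exact ⟨Module.Free.of_equiv e.symm, Module.Finite.equiv e.symm⟩
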